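/- Let P_i be a finite complete family of pairwise orthogonal projection operators on a finite-dimensional inner product space (so that their sum is the identity), and let T be a linear operator. Define the nonnegative matrix A by A_{ij} = the operator norm of P_i T P_j. Then every eigenvalue c of T satisfies |c| ≤ the largest eigenvalue (spectral radius) of A. -/

import Mathlib

open scoped ENNReal NNReal

open Filter Topology

set_option synthInstance.maxHeartbeats 800000
set_option maxHeartbeats 1600000

attribute [local instance] Matrix.linftyOpNormedAddCommGroup Matrix.linftyOpNormedRing
  Matrix.linftyOpNormedAlgebra

/-- Block-norm bound on eigenvalues. If `P i` is a complete family of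
pairwise-orthogonal orthogonal projections summing to the identity and
`A i j = ‖P i ∘L T ∘L P j‖`, then every eigenvalue `c` of `T` satisfies
`‖c‖ ≤ spectralRadius A` (spectral radius taken over the complex spectrum of `A`). -/
theorem stmt_0
    {V : Type*} [NormedAddCommGroup V] [InnerProductSpace ℂ V] [FiniteDimensional ℂ V]
    {n : ℕ} (P : Fin n → V →L[ℂ] V)
    (hidem : ∀ i, P i ∘L P i = P i)
    (hsa : ∀ i, IsSelfAdjoint (P i))
    (horth : ∀ i j, i ≠ j → P i ∘L P j = 0)
    (hsum : ∑ i, P i = 1)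
    (T : V →L[ℂ] V)
    (A : Matrix (Fin n) (Fin n) ℝ)
    (hA : ∀ i j, A i j = ‖P i ∘L T ∘L P j‖)
    (c : ℂ) (hc : Module.End.HasEigenvalue (T : V →ₗ[ℂ] V) c) :
    (‖c‖₊ : ℝ≥0∞) ≤ ⨆ μ ∈ spectrum ℂ (A.map (fun x : ℝ => (x : ℂ))), (‖μ‖₊ : ℝ≥0∞) := by
  classical
  obtain ⟨v, hv⟩ := hc.exists_hasEigenvector
  have hv0 : v ≠ 0 := hv.right
  have hTv : T v = c • v := hv.apply_eq_smul
  set x : Fin n → ℝ≥0 := fun i => ‖P i v‖₊ with hxdef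
  set B : Matrix (Fin n) (Fin n) ℝ≥0 := fun i j => ‖P i ∘L T ∘L P j‖₊ with hBdef
  set M : Matrix (Fin n) (Fin n) ℂ := A.map (fun x : ℝ => (x : ℂ)) with hMdef
  have hsumv : ∑ j, P j v = v := by
    have h := congrArg (fun S : V →L[ℂ] V => S v) hsum
    simpa using h
  -- one-step inequality
  have step : ∀ i, ‖c‖₊ * x i ≤ ∑ j, B i j * x j := by
    intro i
    have h1 : P i (T v) = ∑ j, (P i ∘L T ∘L P j) v := by
      conv_lhs => rw [← hsumv]
      rw [map_sum, map_sum]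
      rfl
    have h2 : ‖c‖₊ * x i = ‖P i (T v)‖₊ := by
      rw [hTv, map_smul, nnnorm_smul]
    rw [h2, h1]
    refine (nnnorm_sum_le _ _).trans (Finset.sum_le_sum fun j _ => ?_)
    have hPj : P j (P j v) = P j v := by
      have h := congrArg (fun S : V →L[ℂ] V => S v) (hidem j)
      simpa using h
    have hval : (P i ∘L T ∘L P j) v = (P i ∘L T ∘L P j) (P j v) := by
      simp only [ContinuousLinearMap.comp_apply, hPj]
    rw [hval]
    exact (P i ∘L T ∘L P j).le_opNNNorm _
  -- iterated inequality
  have iter : ∀ k i, ‖c‖₊ ^ k * x i ≤ ∑ j, (B ^ k) i j * x j := by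
    intro k
    induction k with
    | zero =>
      intro i
      simp [Matrix.one_apply]
    | succ k ih =>
      intro i
      calc ‖c‖₊ ^ (k + 1) * x i = ‖c‖₊ * (‖c‖₊ ^ k * x i) := by ring
        _ ≤ ‖c‖₊ * ∑ j, (B ^ k) i j * x j := mul_le_mul_right (ih i) _
        _ = ∑ j, (B ^ k) i j * (‖c‖₊ * x j) := by
            rw [Finset.mul_sum]; exact Finset.sum_congr rfl fun j _ => by ring
        _ ≤ ∑ j, (B ^ k) i j * ∑ l, B j l * x l :=
            Finset.sum_le_sum fun j _ => mul_le_mul_right (step j) _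
        _ = ∑ l, (B ^ (k + 1)) i l * x l := by
            simp_rw [pow_succ, Matrix.mul_apply, Finset.mul_sum, Finset.sum_mul]
            rw [Finset.sum_comm]
            exact Finset.sum_congr rfl fun l _ => Finset.sum_congr rfl fun j _ => by ring
  -- a nonzero component
  have hex : ∃ i, x i ≠ 0 := by
    by_contra h
    push_neg at h
    apply hv0
    rw [← hsumv]
    refine Finset.sum_eq_zero fun i _ => ?_
    exact nnnorm_eq_zero.mp (h i)
  obtain ⟨i₀, hi₀⟩ := hex
  set X : ℝ≥0 := ∑ j, x j with hXdef
  -- relate M to B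
  set g : ℝ≥0 →+* ℂ := Complex.ofRealHom.comp NNReal.toRealHom with hfdef
  have hMB : M = B.map g := by
    ext i j
    simp [hMdef, Matrix.map_apply, hA i j, hBdef, hfdef, coe_nnnorm]
    rfl
  have hMk : ∀ k : ℕ, M ^ k = (B ^ k).map g := by
    intro k
    have h1 : M = g.mapMatrix B := hMB
    have h2 : (B ^ k).map g = g.mapMatrix (B ^ k) := rfl
    rw [h1, h2, map_pow]
  -- norm bound on row sums of B ^ k
  have hnorm : ∀ k : ℕ, ∑ j, (B ^ k) i₀ j ≤ ‖M ^ k‖₊ := by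
    intro k
    rw [hMk k, Matrix.linfty_opNNNorm_def]
    have h1 : ∑ j, (B ^ k) i₀ j = ∑ j, ‖((B ^ k).map g) i₀ j‖₊ := by
      refine Finset.sum_congr rfl fun j _ => ?_
      simp [Matrix.map_apply, hfdef, Complex.nnnorm_real, NNReal.nnnorm_eq]
    rw [h1]
    exact Finset.le_sup (f := fun i => ∑ j, ‖((B ^ k).map g) i j‖₊) (Finset.mem_univ i₀)
  -- key inequality with constant
  set C : ℝ≥0 := X / x i₀ with hCdef
  have key2 : ∀ k : ℕ, ‖c‖₊ ^ k ≤ ‖M ^ k‖₊ * C := by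
    intro k
    have key : ‖c‖₊ ^ k * x i₀ ≤ ‖M ^ k‖₊ * X := by
      calc ‖c‖₊ ^ k * x i₀ ≤ ∑ j, (B ^ k) i₀ j * x j := iter k i₀
        _ ≤ ∑ j, (B ^ k) i₀ j * X :=
            Finset.sum_le_sum fun j _ => mul_le_mul_right
              (Finset.single_le_sum (fun l _ => zero_le (a := x l)) (Finset.mem_univ j)) _
        _ = (∑ j, (B ^ k) i₀ j) * X := (Finset.sum_mul _ _ _).symm
        _ ≤ ‖M ^ k‖₊ * X := mul_le_mul_left (hnorm k) _
    rw [hCdef, mul_div_assoc']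
    exact (le_div_iff₀ (pos_iff_ne_zero.mpr hi₀)).mpr key
  have hC0 : C ≠ 0 := by
    rw [hCdef]
    refine div_ne_zero ?_ hi₀
    intro hX0
    apply hi₀
    have := Finset.single_le_sum (fun l _ => zero_le (a := x l)) (Finset.mem_univ i₀)
    rw [← hXdef] at this
    simpa [hX0] using this
  -- pass to ℝ≥0∞ and take limits
  have hG := spectrum.pow_nnnorm_pow_one_div_tendsto_nhds_spectralRadius M
  have hCt : Tendsto (fun k : ℕ => ((C : ℝ≥0∞)) ^ (1 / (k : ℝ))) atTop (𝓝 1) := by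
    have h1 : Tendsto (fun k : ℕ => (C ^ (1 / (k : ℝ)) : ℝ≥0)) atTop (𝓝 (C ^ (0 : ℝ))) :=
      Filter.Tendsto.nnrpow tendsto_const_nhds tendsto_one_div_atTop_nhds_zero_nat (Or.inl hC0)
    rw [NNReal.rpow_zero] at h1
    have h2 := (ENNReal.tendsto_coe (α := ℕ)).mpr h1
    refine h2.congr fun k => ?_
    rw [ENNReal.coe_rpow_of_ne_zero hC0]
  have hmul : Tendsto (fun k : ℕ => (‖M ^ k‖₊ : ℝ≥0∞) ^ (1 / (k : ℝ)) * (C : ℝ≥0∞) ^ (1 / (k : ℝ)))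
      atTop (𝓝 (spectralRadius ℂ M * 1)) :=
    ENNReal.Tendsto.mul hG (Or.inr ENNReal.one_ne_top) hCt (Or.inl one_ne_zero)
  have hle : ∀ᶠ k : ℕ in atTop,
      (‖c‖₊ : ℝ≥0∞) ≤ (‖M ^ k‖₊ : ℝ≥0∞) ^ (1 / (k : ℝ)) * (C : ℝ≥0∞) ^ (1 / (k : ℝ)) := by
    filter_upwards [Filter.eventually_ge_atTop 1] with k hk
    have hk0 : (k : ℝ) ≠ 0 := Nat.cast_ne_zero.mpr (by omega)
    have h1 : ((‖c‖₊ : ℝ≥0∞)) ^ k ≤ ((‖M ^ k‖₊ : ℝ≥0∞) * (C : ℝ≥0∞)) := by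
      rw [← ENNReal.coe_pow, ← ENNReal.coe_mul]
      exact ENNReal.coe_le_coe.mpr (key2 k)
    calc (‖c‖₊ : ℝ≥0∞) = (((‖c‖₊ : ℝ≥0∞)) ^ k) ^ (1 / (k : ℝ)) := by
          rw [← ENNReal.rpow_natCast, ← ENNReal.rpow_mul, mul_one_div, div_self hk0,
            ENNReal.rpow_one]
      _ ≤ ((‖M ^ k‖₊ : ℝ≥0∞) * (C : ℝ≥0∞)) ^ (1 / (k : ℝ)) :=
          ENNReal.rpow_le_rpow h1 (by positivity)
      _ = (‖M ^ k‖₊ : ℝ≥0∞) ^ (1 / (k : ℝ)) * (C : ℝ≥0∞) ^ (1 / (k : ℝ)) :=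
          ENNReal.mul_rpow_of_nonneg _ _ (by positivity)
  have hfin : (‖c‖₊ : ℝ≥0∞) ≤ spectralRadius ℂ M * 1 := ge_of_tendsto hmul hle
  rw [mul_one] at hfin
  exact hfin
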